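/- Fix Z = [X; Y] ∈ ℝ^{(n₁+n₂)×r}. Suppose there exists a matrix P ∈ ℝ^{r×r} with 1/2 ≤ σ_r(P) ≤ σ_1(P) ≤ 3/2 such that max{‖XP − X⋆‖_F, ‖YP⁻ᵀ − Y⋆‖_F} ≤ δ, where δ ≤ σ_r(X⋆)/80. Then the optimal alignment matrix Q between Z and Z⋆ exists (i.e., the infimum of ‖XP' − X⋆‖_F² + ‖Y(P')⁻ᵀ − Y⋆‖_F² over invertible P' ∈ ℝ^{r×r} is attained at some invertible Q), and moreover ‖P − Q‖ ≤ ‖P − Q‖_F ≤ 5δ/σ_r(X⋆). -/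

import Mathlib

open Matrix BigOperators

/-- Frobenius norm of a real matrix. -/
noncomputable def frobNorm {m n : ℕ} (A : Matrix (Fin m) (Fin n) ℝ) : ℝ :=
  Real.sqrt (∑ i, ∑ j, (A i j) ^ 2)

/-- Spectral norm (largest singular value) of a real matrix. -/
noncomputable def specNorm {m n : ℕ} (A : Matrix (Fin m) (Fin n) ℝ) : ℝ :=
  ‖LinearMap.toContinuousLinearMap (Matrix.toEuclideanLin A)‖

/-- Smallest singular value of a matrix with `r` columns (the `r`-th largest singular value). -/
noncomputable def sigmaMinCol {m r : ℕ} (A : Matrix (Fin m) (Fin r) ℝ) : ℝ :=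
  sInf { s | ∃ v : EuclideanSpace ℝ (Fin r), ‖v‖ = 1 ∧ s = ‖Matrix.toEuclideanLin A v‖ }

/-- Matrix inner product `⟨A, B⟩ = Tr(Bᵀ A)`. -/
noncomputable def matInner {m n : ℕ} (A B : Matrix (Fin m) (Fin n) ℝ) : ℝ :=
  Matrix.trace (Bᵀ * A)

/-- Euclidean norm on `ℝ^m`. -/
noncomputable def vec2Norm {m : ℕ} (y : Fin m → ℝ) : ℝ :=
  Real.sqrt (∑ i, (y i) ^ 2)

/-- The sensing operator `𝒜(M) = (⟨A_i, M⟩)_{i=1..m}`. -/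
noncomputable def senseOp {n₁ n₂ m : ℕ} (As : Fin m → Matrix (Fin n₁) (Fin n₂) ℝ)
    (M : Matrix (Fin n₁) (Fin n₂) ℝ) : Fin m → ℝ :=
  fun i => matInner (As i) M

/-- The adjoint operator `𝒜*(y) = ∑ i, y i • A i`. -/
noncomputable def senseAdj {n₁ n₂ m : ℕ} (As : Fin m → Matrix (Fin n₁) (Fin n₂) ℝ)
    (y : Fin m → ℝ) : Matrix (Fin n₁) (Fin n₂) ℝ :=
  ∑ i, y i • As i

/-- Rank-`k` restricted isometry property with constant `δ`. -/
def HasRIP {n₁ n₂ m : ℕ} (As : Fin m → Matrix (Fin n₁) (Fin n₂) ℝ) (k : ℕ) (δ : ℝ) : Prop :=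
  0 ≤ δ ∧ δ < 1 ∧
  ∀ M : Matrix (Fin n₁) (Fin n₂) ℝ, M.rank ≤ k →
    (1 - δ) * (frobNorm M) ^ 2 ≤ (vec2Norm (senseOp As M)) ^ 2 ∧
    (vec2Norm (senseOp As M)) ^ 2 ≤ (1 + δ) * (frobNorm M) ^ 2

/-- dist(Z, Z⋆): infimum over invertible `P` of
`sqrt(‖XP − X⋆‖_F² + ‖YP⁻ᵀ − Y⋆‖_F²)`. -/
noncomputable def distZ {n₁ n₂ r : ℕ} (X Xs : Matrix (Fin n₁) (Fin r) ℝ)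
    (Y Ys : Matrix (Fin n₂) (Fin r) ℝ) : ℝ :=
  sInf { v | ∃ P : Matrix (Fin r) (Fin r) ℝ, IsUnit P ∧
    v = Real.sqrt ((frobNorm (X * P - Xs)) ^ 2 + (frobNorm (Y * (P⁻¹)ᵀ - Ys)) ^ 2) }

noncomputable def toE {m n : ℕ} (A : Matrix (Fin m) (Fin n) ℝ) : EuclideanSpace ℝ (Fin m × Fin n) :=
  (WithLp.equiv 2 _).symm (fun p : Fin m × Fin n => A p.1 p.2)

lemma frob_eq_norm {m n : ℕ} (A : Matrix (Fin m) (Fin n) ℝ) : frobNorm A = ‖toE A‖ := by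
  rw [EuclideanSpace.norm_eq, frobNorm]
  congr 1
  rw [Fintype.sum_prod_type]
  simp [toE, sq_abs]

lemma toE_sub {m n : ℕ} (A B : Matrix (Fin m) (Fin n) ℝ) : toE (A - B) = toE A - toE B := rfl

lemma frob_nonneg {m n : ℕ} (A : Matrix (Fin m) (Fin n) ℝ) : 0 ≤ frobNorm A :=
  Real.sqrt_nonneg _

lemma frob_sq {m n : ℕ} (A : Matrix (Fin m) (Fin n) ℝ) :
    (frobNorm A) ^ 2 = ∑ i, ∑ j, (A i j) ^ 2 := by
  rw [frobNorm, Real.sq_sqrt]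
  positivity

noncomputable def enorm {m : ℕ} (v : Fin m → ℝ) : ℝ := ‖(WithLp.equiv 2 (Fin m → ℝ)).symm v‖

lemma enorm_eq {m : ℕ} (v : Fin m → ℝ) : _root_.enorm v = Real.sqrt (∑ i, (v i)^2) := by
  rw [_root_.enorm, EuclideanSpace.norm_eq]
  congr 1
  simp [sq_abs]

lemma enorm_nonneg {m : ℕ} (v : Fin m → ℝ) : 0 ≤ _root_.enorm v := norm_nonneg _

lemma enorm_sq {m : ℕ} (v : Fin m → ℝ) : (_root_.enorm v)^2 = ∑ i, (v i)^2 := by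
  rw [enorm_eq, Real.sq_sqrt]; positivity

lemma norm_toEuc {m r : ℕ} (A : Matrix (Fin m) (Fin r) ℝ) (v : Fin r → ℝ) :
    ‖Matrix.toEuclideanLin A ((WithLp.equiv 2 (Fin r → ℝ)).symm v)‖ = _root_.enorm (A *ᵥ v) := by
  rfl

lemma sigmaMin_mulVec {m r : ℕ} (A : Matrix (Fin m) (Fin r) ℝ) (v : Fin r → ℝ) :
    sigmaMinCol A * _root_.enorm v ≤ _root_.enorm (A *ᵥ v) := by
  rcases eq_or_ne v 0 with rfl | hv
  · simp [enorm_eq, Matrix.mulVec_zero]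
  · have hv' : _root_.enorm v ≠ 0 := by
      simp only [_root_.enorm, ne_eq, norm_eq_zero]
      exact fun h => hv (by simpa [WithLp.equiv] using congrArg (WithLp.equiv 2 (Fin r → ℝ)) h)
    have hpos : 0 < _root_.enorm v := lt_of_le_of_ne (enorm_nonneg v) (Ne.symm hv')
    set u : Fin r → ℝ := (_root_.enorm v)⁻¹ • v with hu
    have hu1 : _root_.enorm u = 1 := by
      rw [hu]
      show ‖(WithLp.equiv 2 (Fin r → ℝ)).symm ((_root_.enorm v)⁻¹ • v)‖ = 1
      rw [show (WithLp.equiv 2 (Fin r → ℝ)).symm ((_root_.enorm v)⁻¹ • v) = (_root_.enorm v)⁻¹ • (WithLp.equiv 2 (Fin r → ℝ)).symm v from rfl, norm_smul]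
      simp [abs_of_pos (inv_pos.mpr hpos), _root_.enorm]
      exact inv_mul_cancel₀ hv'
    have hmem : _root_.enorm (A *ᵥ u) ∈ { s | ∃ w : EuclideanSpace ℝ (Fin r), ‖w‖ = 1 ∧ s = ‖Matrix.toEuclideanLin A w‖ } := by
      exact ⟨(WithLp.equiv 2 (Fin r → ℝ)).symm u, hu1, (norm_toEuc A u).symm⟩
    have hbdd : BddBelow { s | ∃ w : EuclideanSpace ℝ (Fin r), ‖w‖ = 1 ∧ s = ‖Matrix.toEuclideanLin A w‖ } :=
      ⟨0, fun s ⟨w, _, hs⟩ => hs ▸ norm_nonneg _⟩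
    have h1 : sigmaMinCol A ≤ _root_.enorm (A *ᵥ u) := csInf_le hbdd hmem
    have h2 : _root_.enorm (A *ᵥ u) = (_root_.enorm v)⁻¹ * _root_.enorm (A *ᵥ v) := by
      rw [hu]
      show _root_.enorm (A *ᵥ ((_root_.enorm v)⁻¹ • v)) = _
      rw [Matrix.mulVec_smul]
      show ‖(WithLp.equiv 2 (Fin m → ℝ)).symm ((_root_.enorm v)⁻¹ • (A *ᵥ v))‖ = _
      rw [show (WithLp.equiv 2 (Fin m → ℝ)).symm ((_root_.enorm v)⁻¹ • (A *ᵥ v)) = (_root_.enorm v)⁻¹ • (WithLp.equiv 2 (Fin m → ℝ)).symm (A *ᵥ v) from rfl, norm_smul]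
      simp [abs_of_pos (inv_pos.mpr hpos), _root_.enorm]
    rw [h2] at h1
    calc sigmaMinCol A * _root_.enorm v ≤ ((_root_.enorm v)⁻¹ * _root_.enorm (A *ᵥ v)) * _root_.enorm v := by
          exact mul_le_mul_of_nonneg_right h1 (enorm_nonneg v)
      _ = _root_.enorm (A *ᵥ v) := by field_simp

lemma spec_mulVec {m r : ℕ} (A : Matrix (Fin m) (Fin r) ℝ) (v : Fin r → ℝ) :
    _root_.enorm (A *ᵥ v) ≤ specNorm A * _root_.enorm v := by
  have := (LinearMap.toContinuousLinearMap (Matrix.toEuclideanLin A)).le_opNorm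
    ((WithLp.equiv 2 (Fin r → ℝ)).symm v)
  simpa [norm_toEuc, _root_.enorm, specNorm] using this

lemma spec_nonneg {m r : ℕ} (A : Matrix (Fin m) (Fin r) ℝ) : 0 ≤ specNorm A := norm_nonneg _

lemma spec_le_frob {m r : ℕ} (A : Matrix (Fin m) (Fin r) ℝ) : specNorm A ≤ frobNorm A := by
  apply ContinuousLinearMap.opNorm_le_bound _ (frob_nonneg A)
  intro x
  set v : Fin r → ℝ := WithLp.equiv 2 (Fin r → ℝ) x with hv
  have hx : x = (WithLp.equiv 2 (Fin r → ℝ)).symm v := rfl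
  have h1 : ‖LinearMap.toContinuousLinearMap (Matrix.toEuclideanLin A) x‖ = _root_.enorm (A *ᵥ v) := by
    rw [hx]; exact norm_toEuc A v
  have hnx : ‖x‖ = _root_.enorm v := rfl
  rw [h1, hnx]
  have h2 : (_root_.enorm (A *ᵥ v))^2 ≤ (frobNorm A * _root_.enorm v)^2 := by
    rw [enorm_sq, mul_pow, frob_sq, enorm_sq, Finset.sum_mul]
    apply Finset.sum_le_sum
    intro i _
    calc (A *ᵥ v) i ^ 2 = (∑ j, A i j * v j)^2 := by rfl
      _ ≤ (∑ j, (A i j)^2) * (∑ j, (v j)^2) :=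
          Finset.sum_mul_sq_le_sq_mul_sq Finset.univ (fun j => A i j) v
  nlinarith [enorm_nonneg (A *ᵥ v), mul_nonneg (frob_nonneg A) (enorm_nonneg v)]

lemma enorm_single {r : ℕ} (i : Fin r) : _root_.enorm (fun k => if k = i then (1:ℝ) else 0) = 1 := by
  rw [enorm_eq]
  rw [show (∑ k, (if k = i then (1:ℝ) else 0)^2) = 1 by simp]
  exact Real.sqrt_one

lemma le_sigmaMin {m r : ℕ} (hr : 0 < r) (A : Matrix (Fin m) (Fin r) ℝ) (c : ℝ)
    (h : ∀ v : Fin r → ℝ, _root_.enorm v = 1 → c ≤ _root_.enorm (A *ᵥ v)) : c ≤ sigmaMinCol A := by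
  apply le_csInf
  · refine ⟨_root_.enorm (A *ᵥ (fun k => if k = ⟨0, hr⟩ then (1:ℝ) else 0)), ?_⟩
    exact ⟨(WithLp.equiv 2 (Fin r → ℝ)).symm _, enorm_single ⟨0, hr⟩, (norm_toEuc A _).symm⟩
  · rintro s ⟨w, hw, rfl⟩
    set v : Fin r → ℝ := WithLp.equiv 2 (Fin r → ℝ) w with hv
    have : w = (WithLp.equiv 2 (Fin r → ℝ)).symm v := rfl
    rw [this, norm_toEuc]
    exact h v hw

lemma sigma_pos_isUnit {r : ℕ} (P : Matrix (Fin r) (Fin r) ℝ) (h : 0 < sigmaMinCol P) :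
    IsUnit P := by
  rw [Matrix.isUnit_iff_isUnit_det, isUnit_iff_ne_zero]
  intro hdet
  obtain ⟨v, hv0, hv⟩ := (Matrix.exists_mulVec_eq_zero_iff).2 hdet
  have h1 := sigmaMin_mulVec P v
  rw [hv] at h1
  have h2 : _root_.enorm (0 : Fin r → ℝ) = 0 := by simp [enorm_eq]
  rw [h2] at h1
  have h3 : 0 < _root_.enorm v := by
    rcases (enorm_nonneg v).lt_or_eq with h | h
    · exact h
    · exfalso; apply hv0
      have hsum : ∑ i, (v i)^2 = 0 := by
        have := enorm_sq v; rw [← h] at this; simpa using this.symm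
      funext i
      have hz := (Finset.sum_eq_zero_iff_of_nonneg (fun j _ => sq_nonneg (v j))).1 hsum i (Finset.mem_univ i)
      exact pow_eq_zero_iff (by norm_num) |>.1 hz
  nlinarith

lemma frob_triangle {m n : ℕ} (A B : Matrix (Fin m) (Fin n) ℝ) :
    frobNorm (A + B) ≤ frobNorm A + frobNorm B := by
  rw [frob_eq_norm, frob_eq_norm, frob_eq_norm]
  have : toE (A + B) = toE A + toE B := rfl
  rw [this]
  exact norm_add_le _ _

lemma frob_sub_le {m n : ℕ} (A B C : Matrix (Fin m) (Fin n) ℝ) :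
    frobNorm (A - C) ≤ frobNorm (A - B) + frobNorm (B - C) := by
  have : A - C = (A - B) + (B - C) := by abel
  rw [this]; exact frob_triangle _ _

lemma frob_rev_triangle {m n : ℕ} (A B : Matrix (Fin m) (Fin n) ℝ) :
    frobNorm A - frobNorm B ≤ frobNorm (A - B) := by
  rw [frob_eq_norm, frob_eq_norm, frob_eq_norm, toE_sub]
  exact norm_sub_norm_le _ _

lemma frob_transpose {m n : ℕ} (A : Matrix (Fin m) (Fin n) ℝ) :
    frobNorm Aᵀ = frobNorm A := by
  unfold frobNorm
  rw [Finset.sum_comm]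
  rfl

lemma frob_mul_sq_cols {m r s : ℕ} (X : Matrix (Fin m) (Fin r) ℝ) (M : Matrix (Fin r) (Fin s) ℝ) :
    (frobNorm (X * M))^2 = ∑ j, (_root_.enorm (X *ᵥ (fun k => M k j)))^2 := by
  rw [frob_sq, Finset.sum_comm]
  congr 1; funext j
  rw [enorm_sq]
  rfl

lemma frob_sq_cols {m s : ℕ} (A : Matrix (Fin m) (Fin s) ℝ) :
    (frobNorm A)^2 = ∑ j, (_root_.enorm (fun i => A i j))^2 := by
  rw [frob_sq, Finset.sum_comm]
  congr 1; funext j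
  rw [enorm_sq]

lemma sigmaMin_nonneg {m r : ℕ} (A : Matrix (Fin m) (Fin r) ℝ) : 0 ≤ sigmaMinCol A :=
  Real.sInf_nonneg (fun s ⟨w, _, hs⟩ => hs ▸ norm_nonneg _)

lemma frob_mul_lower {m r s : ℕ} (X : Matrix (Fin m) (Fin r) ℝ) (M : Matrix (Fin r) (Fin s) ℝ) :
    sigmaMinCol X * frobNorm M ≤ frobNorm (X * M) := by
  have h2 : (sigmaMinCol X * frobNorm M)^2 ≤ (frobNorm (X * M))^2 := by
    rw [frob_mul_sq_cols, mul_pow, frob_sq_cols, Finset.mul_sum]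
    apply Finset.sum_le_sum
    intro j _
    rw [← mul_pow]
    have h := sigmaMin_mulVec X (fun k => M k j)
    have hs : 0 ≤ sigmaMinCol X * _root_.enorm (fun k => M k j) :=
      mul_nonneg (sigmaMin_nonneg X) (enorm_nonneg _)
    exact pow_le_pow_left₀ hs h 2
  have hnn : 0 ≤ frobNorm (X * M) := frob_nonneg _
  nlinarith [frob_nonneg M, frob_nonneg (X*M)]

lemma enorm_orth {m r : ℕ} (U : Matrix (Fin m) (Fin r) ℝ) (hU : Uᵀ * U = 1) (w : Fin r → ℝ) :
    (_root_.enorm (U *ᵥ w))^2 = ∑ i, (w i)^2 := by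
  rw [enorm_sq]
  have h1 : ∑ i, ((U *ᵥ w) i)^2 = (U *ᵥ w) ⬝ᵥ (U *ᵥ w) := by
    simp [dotProduct, sq]
  rw [h1, dotProduct_mulVec, ← Matrix.mulVec_transpose, Matrix.mulVec_mulVec, hU,
    Matrix.one_mulVec]
  simp [dotProduct, sq]

lemma enorm_star_sq {m r : ℕ} (U : Matrix (Fin m) (Fin r) ℝ) (hU : Uᵀ * U = 1)
    (d : Fin r → ℝ) (hd : ∀ i, 0 < d i) (v : Fin r → ℝ) :
    (_root_.enorm ((U * Matrix.diagonal (fun i => Real.sqrt (d i))) *ᵥ v))^2 = ∑ i, d i * (v i)^2 := by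
  rw [← Matrix.mulVec_mulVec, enorm_orth U hU]
  congr 1; funext i
  rw [Matrix.mulVec_diagonal]
  rw [mul_pow, Real.sq_sqrt (hd i).le]

lemma enorm_rev_triangle {m : ℕ} (a b : Fin m → ℝ) : _root_.enorm a - _root_.enorm b ≤ _root_.enorm (a - b) := by
  have : (WithLp.equiv 2 (Fin m → ℝ)).symm (a - b)
      = (WithLp.equiv 2 (Fin m → ℝ)).symm a - (WithLp.equiv 2 (Fin m → ℝ)).symm b := rfl
  unfold _root_.enorm
  rw [this]
  exact norm_sub_norm_le _ _

lemma frob_sub_comm {m n : ℕ} (A B : Matrix (Fin m) (Fin n) ℝ) :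
    frobNorm (A - B) = frobNorm (B - A) := by
  rw [frob_eq_norm, frob_eq_norm, toE_sub, toE_sub, norm_sub_rev]

lemma entry_le_frob {m n : ℕ} (A : Matrix (Fin m) (Fin n) ℝ) (i : Fin m) (j : Fin n) :
    |A i j| ≤ frobNorm A := by
  rw [frobNorm, ← Real.sqrt_sq_eq_abs]
  apply Real.sqrt_le_sqrt
  calc (A i j)^2 ≤ ∑ j', (A i j')^2 :=
        Finset.single_le_sum (f := fun j' => (A i j')^2) (fun j' _ => sq_nonneg _) (Finset.mem_univ j)
    _ ≤ ∑ i', ∑ j', (A i' j')^2 :=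
        Finset.single_le_sum (f := fun i' => ∑ j', (A i' j')^2)
          (fun i' _ => Finset.sum_nonneg fun j' _ => sq_nonneg _) (Finset.mem_univ i)

lemma frob_continuous {m n : ℕ} : Continuous (fun A : Matrix (Fin m) (Fin n) ℝ => frobNorm A) := by
  unfold frobNorm
  apply Real.continuous_sqrt.comp
  apply continuous_finset_sum
  intro i _
  apply continuous_finset_sum
  intro j _
  exact ((continuous_apply j).comp (continuous_apply i)).pow 2


set_option maxHeartbeats 2000000 in
/-- Lemma 1: if some nearly-orthonormal `P`
(`1/2 ≤ σ_r(P) ≤ σ_1(P) ≤ 3/2`) aligns `Z` with `Z⋆` up to error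
`δ ≤ σ_r(X⋆)/80`, then the optimal alignment matrix `Q` between `Z` and `Z⋆`
exists, and `‖P − Q‖ ≤ ‖P − Q‖_F ≤ 5δ/σ_r(X⋆)`. -/
theorem alignment_near_rotation
    {n₁ n₂ r : ℕ}
    (Ustar : Matrix (Fin n₁) (Fin r) ℝ) (Vstar : Matrix (Fin n₂) (Fin r) ℝ)
    (d : Fin r → ℝ) (hd : ∀ i, 0 < d i)
    (hU : Ustarᵀ * Ustar = 1) (hV : Vstarᵀ * Vstar = 1)
    (Xstar : Matrix (Fin n₁) (Fin r) ℝ) (Ystar : Matrix (Fin n₂) (Fin r) ℝ)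
    (hXs : Xstar = Ustar * Matrix.diagonal (fun i => Real.sqrt (d i)))
    (hYs : Ystar = Vstar * Matrix.diagonal (fun i => Real.sqrt (d i)))
    (X : Matrix (Fin n₁) (Fin r) ℝ) (Y : Matrix (Fin n₂) (Fin r) ℝ)
    (P : Matrix (Fin r) (Fin r) ℝ) (δ : ℝ)
    (hP₁ : 1 / 2 ≤ sigmaMinCol P) (hP₂ : specNorm P ≤ 3 / 2)
    (hX : frobNorm (X * P - Xstar) ≤ δ)
    (hY : frobNorm (Y * (P⁻¹)ᵀ - Ystar) ≤ δ)
    (hδ : δ ≤ sigmaMinCol Xstar / 80) :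
    ∃ Q : Matrix (Fin r) (Fin r) ℝ, IsUnit Q ∧
      (∀ P' : Matrix (Fin r) (Fin r) ℝ, IsUnit P' →
        (frobNorm (X * Q - Xstar)) ^ 2 + (frobNorm (Y * (Q⁻¹)ᵀ - Ystar)) ^ 2 ≤
          (frobNorm (X * P' - Xstar)) ^ 2 + (frobNorm (Y * (P'⁻¹)ᵀ - Ystar)) ^ 2) ∧
      specNorm (P - Q) ≤ frobNorm (P - Q) ∧
      frobNorm (P - Q) ≤ 5 * δ / sigmaMinCol Xstar := by
  -- dispose of the degenerate case r = 0
  rcases Nat.eq_zero_or_pos r with hr0 | hr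
  · exfalso
    subst hr0
    have hempty : { s | ∃ v : EuclideanSpace ℝ (Fin 0), ‖v‖ = 1 ∧
        s = ‖Matrix.toEuclideanLin P v‖ } = (∅ : Set ℝ) := by
      rw [Set.eq_empty_iff_forall_notMem]
      rintro s ⟨v, hv, -⟩
      have hv0 : v = 0 := Subsingleton.elim v 0
      rw [hv0, norm_zero] at hv
      norm_num at hv
    have : sigmaMinCol P = 0 := by
      rw [sigmaMinCol, hempty, Real.sInf_empty]
    rw [this] at hP₁
    norm_num at hP₁
  have hδ0 : 0 ≤ δ := le_trans (frob_nonneg _) hX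
  set σ := sigmaMinCol Xstar with hσdef
  -- singular values of Xstar and Ystar
  have hXv : ∀ v : Fin r → ℝ, (_root_.enorm (Xstar *ᵥ v))^2 = ∑ i, d i * (v i)^2 := by
    intro v; rw [hXs]; exact enorm_star_sq Ustar hU d hd v
  have hYv : ∀ v : Fin r → ℝ, (_root_.enorm (Ystar *ᵥ v))^2 = ∑ i, d i * (v i)^2 := by
    intro v; rw [hYs]; exact enorm_star_sq Vstar hV d hd v
  have hkey : ∀ v : Fin r → ℝ, _root_.enorm (Ystar *ᵥ v) = _root_.enorm (Xstar *ᵥ v) := by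
    intro v
    calc _root_.enorm (Ystar *ᵥ v) = Real.sqrt ((_root_.enorm (Ystar *ᵥ v))^2) :=
          (Real.sqrt_sq (enorm_nonneg _)).symm
      _ = Real.sqrt ((_root_.enorm (Xstar *ᵥ v))^2) := by rw [hYv, hXv]
      _ = _root_.enorm (Xstar *ᵥ v) := Real.sqrt_sq (enorm_nonneg _)
  have hYX : sigmaMinCol Ystar = σ := by
    rw [hσdef]
    unfold sigmaMinCol
    congr 1
    ext s
    constructor
    · rintro ⟨v, hv, rfl⟩
      refine ⟨v, hv, ?_⟩
      have h1 : v = (WithLp.equiv 2 (Fin r → ℝ)).symm (WithLp.equiv 2 (Fin r → ℝ) v) := rfl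
      rw [h1, norm_toEuc, norm_toEuc, hkey]
    · rintro ⟨v, hv, rfl⟩
      refine ⟨v, hv, ?_⟩
      have h1 : v = (WithLp.equiv 2 (Fin r → ℝ)).symm (WithLp.equiv 2 (Fin r → ℝ) v) := rfl
      rw [h1, norm_toEuc, norm_toEuc, hkey]
  -- positivity of σ
  have hne : (Finset.univ : Finset (Fin r)).Nonempty := ⟨⟨0, hr⟩, Finset.mem_univ _⟩
  set μ := Finset.univ.inf' hne d with hμdef
  have hμpos : 0 < μ := by
    rw [hμdef, Finset.lt_inf'_iff]
    exact fun i _ => hd i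
  have hσpos : 0 < σ := by
    have hle : Real.sqrt μ ≤ σ := by
      apply le_sigmaMin hr
      intro v hv
      have hv1 : ∑ i, (v i)^2 = 1 := by
        have := enorm_sq v; rw [hv] at this; simpa using this.symm
      have h2 : μ ≤ (_root_.enorm (Xstar *ᵥ v))^2 := by
        rw [hXv v]
        calc μ = μ * ∑ i, (v i)^2 := by rw [hv1, mul_one]
          _ = ∑ i, μ * (v i)^2 := Finset.mul_sum _ _ _
          _ ≤ ∑ i, d i * (v i)^2 := by
              apply Finset.sum_le_sum
              intro i _
              exact mul_le_mul_of_nonneg_right (Finset.inf'_le d (Finset.mem_univ i)) (sq_nonneg _)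
      calc Real.sqrt μ ≤ Real.sqrt ((_root_.enorm (Xstar *ᵥ v))^2) := Real.sqrt_le_sqrt h2
        _ = _root_.enorm (Xstar *ᵥ v) := Real.sqrt_sq (enorm_nonneg _)
    exact lt_of_lt_of_le (Real.sqrt_pos.mpr hμpos) hle
  have hσδ : 0 < σ - δ := by
    have : δ ≤ σ / 80 := hδ
    linarith
  -- invertibility of P
  have hPunit : IsUnit P := sigma_pos_isUnit P (by linarith)
  have hPdet : IsUnit P.det := (Matrix.isUnit_iff_isUnit_det P).mp hPunit
  have hPinv : P * P⁻¹ = 1 := Matrix.mul_nonsing_inv P hPdet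
  have hPinv' : P⁻¹ * P = 1 := Matrix.nonsing_inv_mul P hPdet
  -- lower bound on sigmaMinCol (X * P)
  have hXPσ : σ - δ ≤ sigmaMinCol (X * P) := by
    apply le_sigmaMin hr
    intro u hu
    have h1 : σ ≤ _root_.enorm (Xstar *ᵥ u) := by
      have := sigmaMin_mulVec Xstar u
      rw [hu, mul_one] at this
      exact this
    have h2 : _root_.enorm ((X * P - Xstar) *ᵥ u) ≤ δ := by
      calc _root_.enorm ((X * P - Xstar) *ᵥ u) ≤ specNorm (X * P - Xstar) * _root_.enorm u :=
            spec_mulVec _ _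
        _ = specNorm (X * P - Xstar) := by rw [hu, mul_one]
        _ ≤ frobNorm (X * P - Xstar) := spec_le_frob _
        _ ≤ δ := hX
    have h3 : _root_.enorm (Xstar *ᵥ u) - _root_.enorm ((X * P) *ᵥ u) ≤ _root_.enorm ((X * P - Xstar) *ᵥ u) := by
      have heq : Xstar *ᵥ u - (X * P) *ᵥ u = -((X * P - Xstar) *ᵥ u) := by
        rw [Matrix.sub_mulVec]; abel
      have := enorm_rev_triangle (Xstar *ᵥ u) ((X * P) *ᵥ u)
      rw [heq] at this
      have hneg : _root_.enorm (-((X * P - Xstar) *ᵥ u)) = _root_.enorm ((X * P - Xstar) *ᵥ u) := by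
        unfold _root_.enorm
        have : (WithLp.equiv 2 (Fin n₁ → ℝ)).symm (-((X * P - Xstar) *ᵥ u))
            = -((WithLp.equiv 2 (Fin n₁ → ℝ)).symm ((X * P - Xstar) *ᵥ u)) := rfl
        rw [this, norm_neg]
      rw [hneg] at this
      exact this
    linarith
  -- lower bound on sigmaMinCol X
  have hc₀ : 2 / 3 * (σ - δ) ≤ sigmaMinCol X := by
    apply le_sigmaMin hr
    intro v hv
    set w := P⁻¹ *ᵥ v with hwdef
    have heq : X *ᵥ v = (X * P) *ᵥ w := by
      rw [hwdef, Matrix.mulVec_mulVec, Matrix.mul_assoc, hPinv, Matrix.mul_one]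
    have h1 : (σ - δ) * _root_.enorm w ≤ _root_.enorm ((X * P) *ᵥ w) :=
      le_trans (mul_le_mul_of_nonneg_right hXPσ (enorm_nonneg _)) (sigmaMin_mulVec _ _)
    have h2 : (1 : ℝ) ≤ 3 / 2 * _root_.enorm w := by
      have hv' : v = P *ᵥ w := by
        rw [hwdef, Matrix.mulVec_mulVec, hPinv, Matrix.one_mulVec]
      have := spec_mulVec P w
      rw [← hv'] at this
      rw [hv] at this
      nlinarith [enorm_nonneg w, spec_nonneg P]
    rw [heq]
    nlinarith [enorm_nonneg w]
  have hc₀pos : 0 < sigmaMinCol X := lt_of_lt_of_le (by nlinarith) hc₀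
  -- lower bound on sigmaMinCol (Y * (P⁻¹)ᵀ)
  have hYPσ : σ - δ ≤ sigmaMinCol (Y * (P⁻¹)ᵀ) := by
    apply le_sigmaMin hr
    intro u hu
    have h1 : σ ≤ _root_.enorm (Ystar *ᵥ u) := by
      have := sigmaMin_mulVec Ystar u
      rw [hu, mul_one, hYX] at this
      exact this
    have h2 : _root_.enorm ((Y * (P⁻¹)ᵀ - Ystar) *ᵥ u) ≤ δ := by
      calc _root_.enorm ((Y * (P⁻¹)ᵀ - Ystar) *ᵥ u) ≤ specNorm (Y * (P⁻¹)ᵀ - Ystar) * _root_.enorm u :=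
            spec_mulVec _ _
        _ = specNorm (Y * (P⁻¹)ᵀ - Ystar) := by rw [hu, mul_one]
        _ ≤ frobNorm (Y * (P⁻¹)ᵀ - Ystar) := spec_le_frob _
        _ ≤ δ := hY
    have h3 : _root_.enorm (Ystar *ᵥ u) - _root_.enorm ((Y * (P⁻¹)ᵀ) *ᵥ u) ≤
        _root_.enorm ((Y * (P⁻¹)ᵀ - Ystar) *ᵥ u) := by
      have heq : Ystar *ᵥ u - (Y * (P⁻¹)ᵀ) *ᵥ u = -((Y * (P⁻¹)ᵀ - Ystar) *ᵥ u) := by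
        rw [Matrix.sub_mulVec]; abel
      have := enorm_rev_triangle (Ystar *ᵥ u) ((Y * (P⁻¹)ᵀ) *ᵥ u)
      rw [heq] at this
      have hneg : _root_.enorm (-((Y * (P⁻¹)ᵀ - Ystar) *ᵥ u)) = _root_.enorm ((Y * (P⁻¹)ᵀ - Ystar) *ᵥ u) := by
        unfold _root_.enorm
        have : (WithLp.equiv 2 (Fin n₂ → ℝ)).symm (-((Y * (P⁻¹)ᵀ - Ystar) *ᵥ u))
            = -((WithLp.equiv 2 (Fin n₂ → ℝ)).symm ((Y * (P⁻¹)ᵀ - Ystar) *ᵥ u)) := rfl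
        rw [this, norm_neg]
      rw [hneg] at this
      exact this
    linarith
  -- bound on frobNorm P⁻¹
  have hPinvCol : ∀ u : Fin r → ℝ, _root_.enorm (P⁻¹ *ᵥ u) ≤ 2 * _root_.enorm u := by
    intro u
    have h1 : _root_.enorm u = _root_.enorm (P *ᵥ (P⁻¹ *ᵥ u)) := by
      rw [Matrix.mulVec_mulVec, hPinv, Matrix.one_mulVec]
    have h2 := sigmaMin_mulVec P (P⁻¹ *ᵥ u)
    have h3 : 1 / 2 * _root_.enorm (P⁻¹ *ᵥ u) ≤ _root_.enorm u := by
      rw [h1]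
      calc 1 / 2 * _root_.enorm (P⁻¹ *ᵥ u) ≤ sigmaMinCol P * _root_.enorm (P⁻¹ *ᵥ u) :=
            mul_le_mul_of_nonneg_right hP₁ (enorm_nonneg _)
        _ ≤ _root_.enorm (P *ᵥ (P⁻¹ *ᵥ u)) := h2
    linarith
  have hrpos : (0:ℝ) < Real.sqrt r := Real.sqrt_pos.mpr (by exact_mod_cast hr)
  have hfrobPinv : frobNorm P⁻¹ ≤ 2 * Real.sqrt r := by
    have hsq : (frobNorm P⁻¹)^2 ≤ 4 * r := by
      rw [frob_sq_cols]
      have hcol : ∀ j : Fin r, (_root_.enorm (fun i => P⁻¹ i j))^2 ≤ 4 := by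
        intro j
        have hbasis : (fun i => P⁻¹ i j) = P⁻¹ *ᵥ (fun k => if k = j then (1:ℝ) else 0) := by
          funext i
          simp [Matrix.mulVec, dotProduct]
        have h5 := hPinvCol (fun k => if k = j then (1:ℝ) else 0)
        rw [enorm_single j, mul_one] at h5
        rw [hbasis]
        have h6 : (_root_.enorm (P⁻¹ *ᵥ fun k => if k = j then (1:ℝ) else 0))^2 ≤ 2^2 :=
          pow_le_pow_left₀ (enorm_nonneg _) h5 2
        norm_num at h6
        exact h6
      calc ∑ j, (_root_.enorm (fun i => P⁻¹ i j))^2 ≤ ∑ _j : Fin r, (4:ℝ) :=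
            Finset.sum_le_sum (fun j _ => hcol j)
        _ = 4 * r := by simp [mul_comm]
    have h7 := Real.sqrt_le_sqrt hsq
    rw [Real.sqrt_sq (frob_nonneg _)] at h7
    have h8 : Real.sqrt (4 * r) = 2 * Real.sqrt r := by
      rw [show (4:ℝ) * r = (2 * Real.sqrt r)^2 by
        rw [mul_pow, Real.sq_sqrt (by positivity)]; norm_num]
      exact Real.sqrt_sq (by positivity)
    rw [h8] at h7
    exact h7
  -- lower bound on sigmaMinCol Y
  have hPTinv : (P⁻¹)ᵀ * Pᵀ = 1 := by
    rw [← Matrix.transpose_mul, hPinv]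
    exact Matrix.transpose_one
  have hc₁ : (σ - δ) / (2 * Real.sqrt r) ≤ sigmaMinCol Y := by
    apply le_sigmaMin hr
    intro v hv
    have heq : Y *ᵥ v = (Y * (P⁻¹)ᵀ) *ᵥ (Pᵀ *ᵥ v) := by
      rw [Matrix.mulVec_mulVec, Matrix.mul_assoc, hPTinv, Matrix.mul_one]
    have h1 : (σ - δ) * _root_.enorm (Pᵀ *ᵥ v) ≤ _root_.enorm ((Y * (P⁻¹)ᵀ) *ᵥ (Pᵀ *ᵥ v)) :=
      le_trans (mul_le_mul_of_nonneg_right hYPσ (enorm_nonneg _)) (sigmaMin_mulVec _ _)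
    have h2 : (1:ℝ) ≤ 2 * Real.sqrt r * _root_.enorm (Pᵀ *ᵥ v) := by
      have hv' : v = (P⁻¹)ᵀ *ᵥ (Pᵀ *ᵥ v) := by
        rw [Matrix.mulVec_mulVec, hPTinv, Matrix.one_mulVec]
      have h3 : _root_.enorm v ≤ specNorm ((P⁻¹)ᵀ) * _root_.enorm (Pᵀ *ᵥ v) := by
        conv_lhs => rw [hv']
        exact spec_mulVec _ _
      have h4 : specNorm ((P⁻¹)ᵀ) ≤ 2 * Real.sqrt r := by
        calc specNorm ((P⁻¹)ᵀ) ≤ frobNorm ((P⁻¹)ᵀ) := spec_le_frob _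
          _ = frobNorm P⁻¹ := frob_transpose _
          _ ≤ 2 * Real.sqrt r := hfrobPinv
      rw [hv] at h3
      calc (1:ℝ) ≤ specNorm ((P⁻¹)ᵀ) * _root_.enorm (Pᵀ *ᵥ v) := h3
        _ ≤ 2 * Real.sqrt r * _root_.enorm (Pᵀ *ᵥ v) :=
            mul_le_mul_of_nonneg_right h4 (enorm_nonneg _)
    rw [heq]
    rw [div_le_iff₀ (by positivity)]
    calc (σ - δ) ≤ (σ - δ) * (2 * Real.sqrt r * _root_.enorm (Pᵀ *ᵥ v)) :=
          le_mul_of_one_le_right hσδ.le h2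
      _ = ((σ - δ) * _root_.enorm (Pᵀ *ᵥ v)) * (2 * Real.sqrt r) := by ring
      _ ≤ _root_.enorm ((Y * (P⁻¹)ᵀ) *ᵥ (Pᵀ *ᵥ v)) * (2 * Real.sqrt r) :=
          mul_le_mul_of_nonneg_right h1 (by positivity)
  have hc₁pos : 0 < sigmaMinCol Y := lt_of_lt_of_le (by positivity) hc₁
  -- the compact set K and objective g
  set c₀ := sigmaMinCol X with hc₀def
  set c₁ := sigmaMinCol Y with hc₁def
  set R := (frobNorm Xstar + 2 * δ) / c₀ with hRdef
  set R' := (frobNorm Ystar + 2 * δ) / c₁ with hR'def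
  set g : Matrix (Fin r) (Fin r) ℝ × Matrix (Fin r) (Fin r) ℝ → ℝ :=
    fun p => (frobNorm (X * p.1 - Xstar))^2 + (frobNorm (Y * p.2ᵀ - Ystar))^2 with hgdef
  set K : Set (Matrix (Fin r) (Fin r) ℝ × Matrix (Fin r) (Fin r) ℝ) :=
    {p | p.1 * p.2 = 1 ∧ frobNorm p.1 ≤ R ∧ frobNorm p.2 ≤ R'} with hKdef
  have hgcont : Continuous g := by
    apply Continuous.add
    · exact ((frob_continuous.comp
        ((continuous_const.matrix_mul continuous_fst).sub continuous_const)).pow 2)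
    · exact ((frob_continuous.comp
        ((continuous_const.matrix_mul (continuous_snd.matrix_transpose)).sub
          continuous_const)).pow 2)
  have hKclosed : IsClosed K := by
    apply IsClosed.inter
    · exact isClosed_eq (continuous_fst.matrix_mul continuous_snd) continuous_const
    · apply IsClosed.inter
      · exact isClosed_le (frob_continuous.comp continuous_fst) continuous_const
      · exact isClosed_le (frob_continuous.comp continuous_snd) continuous_const
  have hKcompact : IsCompact K := by
    have hS : IsCompact ((Set.pi Set.univ fun _ : Fin r => Set.pi Set.univ fun _ : Fin r =>
        Set.Icc (-R) R) ×ˢ (Set.pi Set.univ fun _ : Fin r => Set.pi Set.univ fun _ : Fin r =>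
        Set.Icc (-R') R') : Set (Matrix (Fin r) (Fin r) ℝ × Matrix (Fin r) (Fin r) ℝ)) := by
      exact IsCompact.prod
        (isCompact_univ_pi fun _ => isCompact_univ_pi fun _ => isCompact_Icc)
        (isCompact_univ_pi fun _ => isCompact_univ_pi fun _ => isCompact_Icc)
    apply IsCompact.of_isClosed_subset hS hKclosed
    rintro ⟨A, B⟩ ⟨-, hA, hB⟩
    constructor
    · intro i _
      intro j _
      have := entry_le_frob A i j
      have h2 := abs_le.mp (le_trans this hA)
      exact ⟨h2.1, h2.2⟩
    · intro i _
      intro j _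
      have := entry_le_frob B i j
      have h2 := abs_le.mp (le_trans this hB)
      exact ⟨h2.1, h2.2⟩
  -- (P, P⁻¹) belongs to K
  have hfrobP : frobNorm P ≤ R := by
    rw [hRdef, le_div_iff₀ hc₀pos]
    have h1 : c₀ * frobNorm P ≤ frobNorm (X * P) := frob_mul_lower X P
    have h2 : frobNorm (X * P) - frobNorm Xstar ≤ frobNorm (X * P - Xstar) :=
      frob_rev_triangle _ _
    linarith [mul_comm (frobNorm P) c₀ ▸ h1]
  have hfrobPinv' : frobNorm P⁻¹ ≤ R' := by
    rw [hR'def, le_div_iff₀ hc₁pos]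
    have h1 : c₁ * frobNorm ((P⁻¹)ᵀ) ≤ frobNorm (Y * (P⁻¹)ᵀ) := frob_mul_lower Y _
    rw [frob_transpose] at h1
    have h2 : frobNorm (Y * (P⁻¹)ᵀ) - frobNorm Ystar ≤ frobNorm (Y * (P⁻¹)ᵀ - Ystar) :=
      frob_rev_triangle _ _
    linarith [mul_comm (frobNorm P⁻¹) c₁ ▸ h1]
  have hPK : (P, P⁻¹) ∈ K := ⟨hPinv, hfrobP, hfrobPinv'⟩
  -- extract the minimizer
  obtain ⟨q, hqK, hqmin⟩ := hKcompact.exists_isMinOn ⟨(P, P⁻¹), hPK⟩ hgcont.continuousOn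
  obtain ⟨hq1, hqR, hqR'⟩ := hqK
  have hQdet : IsUnit q.1.det := by
    apply IsUnit.of_mul_eq_one q.2.det
    rw [← Matrix.det_mul, hq1, Matrix.det_one]
  have hQunit : IsUnit q.1 := (Matrix.isUnit_iff_isUnit_det _).mpr hQdet
  have hQinv : q.1⁻¹ = q.2 := Matrix.inv_eq_right_inv hq1
  refine ⟨q.1, hQunit, ?_, spec_le_frob _, ?_⟩
  · -- global minimality over invertible matrices
    intro P' hP'unit
    have hP'det : IsUnit P'.det := (Matrix.isUnit_iff_isUnit_det P').mp hP'unit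
    have hP'inv : P' * P'⁻¹ = 1 := Matrix.mul_nonsing_inv P' hP'det
    have hgq : (frobNorm (X * q.1 - Xstar))^2 + (frobNorm (Y * (q.1⁻¹)ᵀ - Ystar))^2 = g q := by
      rw [hQinv]
    rw [hgq]
    by_cases hmem : (P', P'⁻¹) ∈ K
    · have := hqmin hmem
      simpa [hgdef] using this
    · -- outside K the objective exceeds g (P, P⁻¹)
      have hfP : g (P, P⁻¹) ≤ 2 * δ^2 := by
        have h1 : (frobNorm (X * P - Xstar))^2 ≤ δ^2 :=
          pow_le_pow_left₀ (frob_nonneg _) hX 2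
        have h2 : (frobNorm (Y * (P⁻¹)ᵀ - Ystar))^2 ≤ δ^2 :=
          pow_le_pow_left₀ (frob_nonneg _) hY 2
        have : g (P, P⁻¹) = (frobNorm (X * P - Xstar))^2 + (frobNorm (Y * (P⁻¹)ᵀ - Ystar))^2 := rfl
        rw [this]; linarith
      have hqP : g q ≤ 2 * δ^2 := le_trans (hqmin hPK) hfP
      have hout : ¬(frobNorm P' ≤ R ∧ frobNorm P'⁻¹ ≤ R') := by
        intro h
        exact hmem ⟨hP'inv, h.1, h.2⟩
      have hbig : 2 * δ ≤ (frobNorm (X * P' - Xstar)) ∨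
          2 * δ ≤ (frobNorm (Y * (P'⁻¹)ᵀ - Ystar)) := by
        rcases not_and_or.mp hout with h | h
        · left
          push_neg at h
          have h1 : c₀ * frobNorm P' ≤ frobNorm (X * P') := frob_mul_lower X P'
          have h2 : frobNorm (X * P') - frobNorm Xstar ≤ frobNorm (X * P' - Xstar) :=
            frob_rev_triangle _ _
          have h3 : c₀ * R < c₀ * frobNorm P' := by
            exact (mul_lt_mul_iff_right₀ hc₀pos).mpr h
          have h4 : c₀ * R = frobNorm Xstar + 2 * δ := by
            rw [hRdef, mul_div_cancel₀ _ (ne_of_gt hc₀pos)]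
          linarith
        · right
          push_neg at h
          have h1 : c₁ * frobNorm ((P'⁻¹)ᵀ) ≤ frobNorm (Y * (P'⁻¹)ᵀ) := frob_mul_lower Y _
          rw [frob_transpose] at h1
          have h2 : frobNorm (Y * (P'⁻¹)ᵀ) - frobNorm Ystar ≤ frobNorm (Y * (P'⁻¹)ᵀ - Ystar) :=
            frob_rev_triangle _ _
          have h3 : c₁ * R' < c₁ * frobNorm P'⁻¹ := (mul_lt_mul_iff_right₀ hc₁pos).mpr h
          have h4 : c₁ * R' = frobNorm Ystar + 2 * δ := by
            rw [hR'def, mul_div_cancel₀ _ (ne_of_gt hc₁pos)]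
          linarith
      have hfar : 4 * δ^2 ≤ (frobNorm (X * P' - Xstar))^2 + (frobNorm (Y * (P'⁻¹)ᵀ - Ystar))^2 := by
        rcases hbig with h | h
        · have := pow_le_pow_left₀ (by linarith : (0:ℝ) ≤ 2*δ) h 2
          nlinarith [frob_nonneg (Y * (P'⁻¹)ᵀ - Ystar)]
        · have := pow_le_pow_left₀ (by linarith : (0:ℝ) ≤ 2*δ) h 2
          nlinarith [frob_nonneg (X * P' - Xstar)]
      calc g q ≤ 2 * δ^2 := hqP
        _ ≤ 4 * δ^2 := by nlinarith [sq_nonneg δ]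
        _ ≤ _ := hfar
  · -- Frobenius bound on P - Q
    have hfP : g (P, P⁻¹) ≤ 2 * δ^2 := by
      have h1 : (frobNorm (X * P - Xstar))^2 ≤ δ^2 :=
        pow_le_pow_left₀ (frob_nonneg _) hX 2
      have h2 : (frobNorm (Y * (P⁻¹)ᵀ - Ystar))^2 ≤ δ^2 :=
        pow_le_pow_left₀ (frob_nonneg _) hY 2
      have : g (P, P⁻¹) = (frobNorm (X * P - Xstar))^2 + (frobNorm (Y * (P⁻¹)ᵀ - Ystar))^2 := rfl
      rw [this]; linarith
    have hqP : g q ≤ 2 * δ^2 := le_trans (hqmin hPK) hfP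
    have hXQ : frobNorm (X * q.1 - Xstar) ≤ 2 * δ := by
      have h1 : (frobNorm (X * q.1 - Xstar))^2 ≤ 2 * δ^2 := by
        have : g q = (frobNorm (X * q.1 - Xstar))^2 + (frobNorm (Y * q.2ᵀ - Ystar))^2 := rfl
        nlinarith [frob_nonneg (Y * q.2ᵀ - Ystar), sq_nonneg (frobNorm (Y * q.2ᵀ - Ystar))]
      nlinarith [frob_nonneg (X * q.1 - Xstar)]
    have hXPQ : frobNorm (X * (P - q.1)) ≤ 3 * δ := by
      have heq : X * (P - q.1) = (X * P - Xstar) - (X * q.1 - Xstar) := by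
        rw [Matrix.mul_sub]; abel
      rw [heq]
      calc frobNorm ((X * P - Xstar) - (X * q.1 - Xstar))
          ≤ frobNorm (X * P - Xstar) + frobNorm (X * q.1 - Xstar) := by
            have h := frob_triangle (X * P - Xstar) (-(X * q.1 - Xstar))
            have heq2 : (X * P - Xstar) + -(X * q.1 - Xstar) = (X * P - Xstar) - (X * q.1 - Xstar) := by abel
            rw [heq2] at h
            have hneg : frobNorm (-(X * q.1 - Xstar)) = frobNorm (X * q.1 - Xstar) := by
              have : -(X * q.1 - Xstar) = (0 : Matrix (Fin n₁) (Fin r) ℝ) - (X * q.1 - Xstar) := by abel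
              rw [this, frob_sub_comm]
              congr 1
              abel
            rw [hneg] at h
            exact h
        _ ≤ 3 * δ := by linarith
    have hlow : c₀ * frobNorm (P - q.1) ≤ frobNorm (X * (P - q.1)) := frob_mul_lower X _
    have hPQ : frobNorm (P - q.1) ≤ 3 * δ / c₀ := by
      rw [le_div_iff₀ hc₀pos, mul_comm]
      exact le_trans hlow hXPQ
    have hfinal : 3 * δ / c₀ ≤ 5 * δ / σ := by
      rw [div_le_div_iff₀ hc₀pos hσpos]
      have hc₀low : 2/3 * (σ - δ) ≤ c₀ := hc₀
      nlinarith
    exact le_trans hPQ hfinal
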